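/- A number s ∈ (0, 1/2) is a fixed point of the renormalization map R (i.e., R(s) = s) if and only if there exists an integer n ≥ 1 such that s = (−n + √(n(n+2)))/2. -/

import Mathlib

noncomputable section

/-- The renormalization map R : [0,1) → [0,1),
R(s) = s/(1−2s) − ⌊s/(1−2s)⌋ for s ∈ [0,1/2), R(s) = 1−s for s ∈ [1/2,1). -/
def Rmap (s : ℝ) : ℝ :=
  if s < 1/2 then s / (1 - 2*s) - ⌊s / (1 - 2*s)⌋ else 1 - s

/-- A number s ∈ (0,1/2) is a fixed point of R iff
s = (−n + √(n(n+2)))/2 for some integer n ≥ 1. -/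
theorem stmt_3 (s : ℝ) (h0 : 0 < s) (h1 : s < 1/2) :
    Rmap s = s ↔
      ∃ n : ℤ, 1 ≤ n ∧ s = (-(n : ℝ) + Real.sqrt ((n : ℝ) * ((n : ℝ) + 2))) / 2 := by
  have hd : (0:ℝ) < 1 - 2*s := by linarith
  have hd' : (1:ℝ) - 2*s ≠ 0 := ne_of_gt hd
  rw [Rmap, if_pos h1]
  constructor
  · intro h
    set n : ℤ := ⌊s / (1 - 2*s)⌋ with hn
    refine ⟨n, ?_, ?_⟩
    · -- s/(1-2s) = s + n
      have heq : s / (1 - 2*s) = s + n := by linarith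
      have hkey : 2*s^2 + 2*(n:ℝ)*s - n = 0 := by
        have := heq
        rw [div_eq_iff hd'] at this
        nlinarith [this]
      -- n(1-2s) = 2s² > 0 so n > 0
      have hnpos : (0:ℝ) < n := by nlinarith [sq_nonneg s, mul_pos h0 h0]
      exact_mod_cast Int.lt_iff_add_one_le.mp (by exact_mod_cast hnpos : (0:ℤ) < n)
    · have heq : s / (1 - 2*s) = s + n := by linarith
      have hkey : 2*s^2 + 2*(n:ℝ)*s - n = 0 := by
        rw [div_eq_iff hd'] at heq
        nlinarith [heq]
      have hsq : (n:ℝ) * ((n:ℝ) + 2) = (2*s + n)^2 := by nlinarith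
      have hpos : (0:ℝ) ≤ 2*s + n := by
        have hnpos : (0:ℝ) < n := by nlinarith [sq_nonneg s]
        linarith
      rw [hsq, Real.sqrt_sq hpos]
      ring
  · rintro ⟨n, hn1, hs⟩
    have hnn : (0:ℝ) ≤ (n:ℝ) * ((n:ℝ) + 2) := by
      have : (1:ℝ) ≤ (n:ℝ) := by exact_mod_cast hn1
      nlinarith
    have hsq : (2*s + n)^2 = (n:ℝ) * ((n:ℝ) + 2) := by
      have : 2*s + (n:ℝ) = Real.sqrt ((n:ℝ) * ((n:ℝ) + 2)) := by
        rw [hs]; ring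
      rw [this, Real.sq_sqrt hnn]
    have hkey : 2*s^2 + 2*(n:ℝ)*s - n = 0 := by nlinarith
    have heq : s / (1 - 2*s) = s + n := by
      rw [div_eq_iff hd']; nlinarith
    rw [heq]
    have hfl : ⌊s + (n:ℝ)⌋ = n := by
      rw [Int.floor_add_intCast]
      simp [Int.floor_eq_zero_iff, Set.mem_Ico, le_of_lt h0]
      linarith
    rw [hfl]; ring

end
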